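/- The interpretation I defined by: Δ^I = {1, 2, 3, …} ∪ {∞}; R^I(i, i+1) = 1 for every i ∈ {1,2,3,…}, R^I(∞, ∞) = 1, and R^I(u, v) = 0 for all other pairs; A^I(∞) = 1 and A^I(i) = (2^i − 1)/2^i for every i ∈ {1,2,3,…}; and a^I = 1, is a witnessed interpretation under Łukasiewicz semantics and is a model of the knowledge base K2. -/

import Mathlib

/-- ALC concepts over a single atomic concept `A` and a single role `R`. -/
inductive ALCConcept : Type where
  | atom : ALCConcept
  | top  : ALCConcept
  | bot  : ALCConcept
  | conj : ALCConcept → ALCConcept → ALCConcept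
  | disj : ALCConcept → ALCConcept → ALCConcept
  | neg  : ALCConcept → ALCConcept
  | all  : ALCConcept → ALCConcept
  | ex   : ALCConcept → ALCConcept

/-- Łukasiewicz t-norm. -/
def lukT (x y : ℝ) : ℝ := max (x + y - 1) 0
/-- Łukasiewicz t-conorm. -/
def lukS (x y : ℝ) : ℝ := min (x + y) 1
/-- Łukasiewicz implication. -/
def lukImp (x y : ℝ) : ℝ := min (1 - x + y) 1

/-- Value of a concept at a point under Łukasiewicz semantics. -/
noncomputable def lukVal {Δ : Type} (A : Δ → ℝ) (R : Δ → Δ → ℝ) : ALCConcept → Δ → ℝ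
  | ALCConcept.atom, x => A x
  | ALCConcept.top, _ => 1
  | ALCConcept.bot, _ => 0
  | ALCConcept.conj C D, x => lukT (lukVal A R C x) (lukVal A R D x)
  | ALCConcept.disj C D, x => lukS (lukVal A R C x) (lukVal A R D x)
  | ALCConcept.neg C, x => 1 - lukVal A R C x
  | ALCConcept.all C, x => ⨅ y, lukImp (R x y) (lukVal A R C y)
  | ALCConcept.ex C, x => ⨆ y, lukT (R x y) (lukVal A R C y)

/-- Degree of subsumption `(C ⊑ D)^I` under Łukasiewicz semantics. -/
noncomputable def lukSub {Δ : Type} (A : Δ → ℝ) (R : Δ → Δ → ℝ) (C D : ALCConcept) : ℝ :=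
  ⨅ x, lukImp (lukVal A R C x) (lukVal A R D x)

/-- A fuzzy interpretation: nonempty domain, values in `[0,1]`. -/
def IsInterp {Δ : Type} (A : Δ → ℝ) (R : Δ → Δ → ℝ) : Prop :=
  Nonempty Δ ∧ (∀ x, A x ∈ Set.Icc (0:ℝ) 1) ∧ (∀ x y, R x y ∈ Set.Icc (0:ℝ) 1)

/-- Witnessed interpretation under Łukasiewicz semantics. -/
def Witnessed {Δ : Type} (A : Δ → ℝ) (R : Δ → Δ → ℝ) : Prop :=
  ∀ (C D : ALCConcept) (x : Δ),
    (∃ y, lukVal A R (ALCConcept.ex C) x = lukT (R x y) (lukVal A R C y)) ∧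
    (∃ y, lukVal A R (ALCConcept.all C) x = lukImp (R x y) (lukVal A R C y)) ∧
    (∃ y, lukSub A R C D = lukImp (lukVal A R C y) (lukVal A R D y))

/-- `I` (with designated element `a`) is a model of the knowledge base `K2`. -/
def ModelK2 {Δ : Type} (A : Δ → ℝ) (R : Δ → Δ → ℝ) (a : Δ) : Prop :=
  A a = 1/2 ∧
  lukSub A R ALCConcept.top (ALCConcept.ex ALCConcept.top) = 1 ∧
  (lukSub A R (ALCConcept.all ALCConcept.atom) (ALCConcept.ex ALCConcept.atom) = 1 ∧
   lukSub A R (ALCConcept.ex ALCConcept.atom) (ALCConcept.all ALCConcept.atom) = 1) ∧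
  (lukSub A R ALCConcept.atom (ALCConcept.conj (ALCConcept.all ALCConcept.atom) (ALCConcept.all ALCConcept.atom)) = 1 ∧
   lukSub A R (ALCConcept.conj (ALCConcept.all ALCConcept.atom) (ALCConcept.all ALCConcept.atom)) ALCConcept.atom = 1)

/-- The atomic-concept membership function of the model: `A^I(∞) = 1`,
`A^I(i) = (2^(i+1) - 1)/2^(i+1)` (indices shifted: `some i` is the element `i+1` of the paper). -/
noncomputable def A3 : Option ℕ → ℝ
  | Option.none => 1
  | Option.some i => ((2:ℝ)^(i+1) - 1) / (2:ℝ)^(i+1)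

/-- The role membership function of the model: `R^I(i, i+1) = 1`, `R^I(∞,∞) = 1`, else `0`. -/
noncomputable def R3 : Option ℕ → Option ℕ → ℝ
  | Option.some i, Option.some j => if j = i + 1 then 1 else 0
  | Option.none, Option.none => 1
  | _, _ => 0

open Filter Topology

/-- Successor function on the domain. -/
def sux : Option ℕ → Option ℕ
  | Option.none => Option.none
  | Option.some i => Option.some (i+1)

lemma R3_eq (x y : Option ℕ) : R3 x y = if y = sux x then 1 else 0 := by
  cases x <;> cases y <;> simp [R3, sux]

lemma A3_mem (x : Option ℕ) : A3 x ∈ Set.Icc (0:ℝ) 1 := by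
  cases x with
  | none => norm_num [A3]
  | some i =>
    have h2 : (0:ℝ) < 2 ^ (i+1) := by positivity
    simp only [A3]
    constructor
    · apply div_nonneg _ h2.le
      have : (1:ℝ) ≤ 2 ^ (i+1) := one_le_pow₀ (by norm_num)
      linarith
    · rw [div_le_one h2]; linarith

lemma iSup_lukT (v : Option ℕ → ℝ) (hv : ∀ y, v y ∈ Set.Icc (0:ℝ) 1) (x : Option ℕ) :
    (⨆ y, lukT (R3 x y) (v y)) = v (sux x) := by
  have key : ∀ y, lukT (R3 x y) (v y) = if y = sux x then v (sux x) else 0 := by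
    intro y
    rw [R3_eq]
    by_cases h : y = sux x
    · rw [if_pos h, if_pos h, h]
      simp only [lukT]
      rw [show (1:ℝ) + v (sux x) - 1 = v (sux x) by ring, max_eq_left (hv (sux x)).1]
    · rw [if_neg h, if_neg h]
      simp only [lukT]
      rw [max_eq_right]; linarith [(hv y).2]
  simp only [key]
  apply le_antisymm
  · apply ciSup_le
    intro y
    by_cases h : y = sux x <;> simp [h, (hv (sux x)).1]
  · have : BddAbove (Set.range fun y => if y = sux x then v (sux x) else 0) := by
      refine ⟨max (v (sux x)) 0, ?_⟩
      rintro _ ⟨y, rfl⟩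
      by_cases h : y = sux x <;> simp [h, le_max_left, le_max_right]
    have := le_ciSup this (sux x)
    simpa using this

lemma iInf_lukImp (v : Option ℕ → ℝ) (hv : ∀ y, v y ∈ Set.Icc (0:ℝ) 1) (x : Option ℕ) :
    (⨅ y, lukImp (R3 x y) (v y)) = v (sux x) := by
  have key : ∀ y, lukImp (R3 x y) (v y) = if y = sux x then v (sux x) else 1 := by
    intro y
    rw [R3_eq]
    by_cases h : y = sux x
    · rw [if_pos h, if_pos h, h]
      simp only [lukImp]
      rw [show (1:ℝ) - 1 + v (sux x) = v (sux x) by ring, min_eq_left (hv (sux x)).2]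
    · rw [if_neg h, if_neg h]
      simp only [lukImp]
      rw [min_eq_right]; linarith [(hv y).1]
  simp only [key]
  apply le_antisymm
  · have : BddBelow (Set.range fun y => if y = sux x then v (sux x) else 1) := by
      refine ⟨min (v (sux x)) 1, ?_⟩
      rintro _ ⟨y, rfl⟩
      by_cases h : y = sux x <;> simp [h, min_le_left, min_le_right]
    have := ciInf_le this (sux x)
    simpa using this
  · apply le_ciInf
    intro y
    by_cases h : y = sux x <;> simp [h, (hv (sux x)).2]

lemma val_mem (C : ALCConcept) (x : Option ℕ) : lukVal A3 R3 C x ∈ Set.Icc (0:ℝ) 1 := by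
  induction C generalizing x with
  | atom => exact A3_mem x
  | top => simp [lukVal]
  | bot => simp [lukVal]
  | conj C D hC hD =>
    simp only [lukVal, lukT]
    constructor
    · exact le_max_right _ _
    · exact max_le (by linarith [(hC x).2, (hD x).2]) (by norm_num)
  | disj C D hC hD =>
    simp only [lukVal, lukS]
    constructor
    · exact le_min (by linarith [(hC x).1, (hD x).1]) (by norm_num)
    · exact min_le_right _ _
  | neg C hC =>
    simp only [lukVal]
    constructor
    · linarith [(hC x).2]
    · linarith [(hC x).1]
  | all C hC =>
    show (⨅ y, lukImp (R3 x y) (lukVal A3 R3 C y)) ∈ _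
    rw [iInf_lukImp _ hC]
    exact hC _
  | ex C hC =>
    show (⨆ y, lukT (R3 x y) (lukVal A3 R3 C y)) ∈ _
    rw [iSup_lukT _ hC]
    exact hC _

lemma val_ex (C : ALCConcept) (x : Option ℕ) :
    lukVal A3 R3 (ALCConcept.ex C) x = lukVal A3 R3 C (sux x) :=
  iSup_lukT _ (val_mem C) x

lemma val_all (C : ALCConcept) (x : Option ℕ) :
    lukVal A3 R3 (ALCConcept.all C) x = lukVal A3 R3 C (sux x) :=
  iInf_lukImp _ (val_mem C) x

/-- Size of a concept (number of atom occurrences, with top/bot counting 0). -/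
def csize : ALCConcept → ℕ
  | ALCConcept.atom => 1
  | ALCConcept.top => 0
  | ALCConcept.bot => 0
  | ALCConcept.conj C D => csize C + csize D
  | ALCConcept.disj C D => csize C + csize D
  | ALCConcept.neg C => csize C
  | ALCConcept.all C => csize C
  | ALCConcept.ex C => csize C

lemma lukT_lip (a b a' b' : ℝ) : |lukT a b - lukT a' b'| ≤ |a - a'| + |b - b'| := by
  unfold lukT
  calc |max (a + b - 1) 0 - max (a' + b' - 1) 0| ≤ |(a + b - 1) - (a' + b' - 1)| :=
        abs_max_sub_max_le_abs _ _ _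
    _ ≤ |a - a'| + |b - b'| := by
        have := abs_add_le (a - a') (b - b')
        have h : a + b - 1 - (a' + b' - 1) = (a - a') + (b - b') := by ring
        rw [h]; exact this

lemma lukS_lip (a b a' b' : ℝ) : |lukS a b - lukS a' b'| ≤ |a - a'| + |b - b'| := by
  unfold lukS
  calc |min (a + b) 1 - min (a' + b') 1| ≤ max |(a + b) - (a' + b')| |1 - 1| :=
        abs_min_sub_min_le_max _ _ _ _
    _ ≤ |a - a'| + |b - b'| := by
        rw [sub_self, abs_zero]
        apply max_le _ (by positivity)
        have := abs_add_le (a - a') (b - b')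
        have h : a + b - (a' + b') = (a - a') + (b - b') := by ring
        rw [h]; exact this

lemma lukImp_lip (a b a' b' : ℝ) : |lukImp a b - lukImp a' b'| ≤ |a - a'| + |b - b'| := by
  unfold lukImp
  calc |min (1 - a + b) 1 - min (1 - a' + b') 1| ≤ max |(1 - a + b) - (1 - a' + b')| |1 - 1| :=
        abs_min_sub_min_le_max _ _ _ _
    _ ≤ |a - a'| + |b - b'| := by
        rw [sub_self, abs_zero]
        apply max_le _ (by positivity)
        have := abs_add_le (a' - a) (b - b')
        have h : 1 - a + b - (1 - a' + b') = (a' - a) + (b - b') := by ring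
        rw [h, abs_sub_comm a a']; exact this

lemma A3_close (i : ℕ) : |A3 (Option.some i) - A3 Option.none| = ((2:ℝ)⁻¹) ^ (i+1) := by
  have h2 : (0:ℝ) < 2 ^ (i+1) := by positivity
  simp only [A3]
  rw [abs_sub_comm, show (1:ℝ) - (2^(i+1) - 1)/2^(i+1) = 1/2^(i+1) by field_simp; ring]
  rw [abs_of_pos (by positivity), one_div, ← inv_pow]

lemma val_close (C : ALCConcept) (i : ℕ) :
    |lukVal A3 R3 C (Option.some i) - lukVal A3 R3 C Option.none|
      ≤ (csize C : ℝ) * ((2:ℝ)⁻¹) ^ (i+1) := by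
  induction C generalizing i with
  | atom => rw [show lukVal A3 R3 ALCConcept.atom = A3 from rfl, A3_close]; simp [csize]
  | top => simp [lukVal, csize]
  | bot => simp [lukVal, csize]
  | conj C D hC hD =>
    simp only [lukVal, csize]
    calc _ ≤ |lukVal A3 R3 C (Option.some i) - lukVal A3 R3 C Option.none|
            + |lukVal A3 R3 D (Option.some i) - lukVal A3 R3 D Option.none| :=
          lukT_lip _ _ _ _
      _ ≤ (csize C : ℝ) * ((2:ℝ)⁻¹)^(i+1) + (csize D : ℝ) * ((2:ℝ)⁻¹)^(i+1) :=
          add_le_add (hC i) (hD i)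
      _ = ((csize C + csize D : ℕ) : ℝ) * ((2:ℝ)⁻¹)^(i+1) := by push_cast; ring
  | disj C D hC hD =>
    simp only [lukVal, csize]
    calc _ ≤ |lukVal A3 R3 C (Option.some i) - lukVal A3 R3 C Option.none|
            + |lukVal A3 R3 D (Option.some i) - lukVal A3 R3 D Option.none| :=
          lukS_lip _ _ _ _
      _ ≤ (csize C : ℝ) * ((2:ℝ)⁻¹)^(i+1) + (csize D : ℝ) * ((2:ℝ)⁻¹)^(i+1) :=
          add_le_add (hC i) (hD i)
      _ = ((csize C + csize D : ℕ) : ℝ) * ((2:ℝ)⁻¹)^(i+1) := by push_cast; ring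
  | neg C hC =>
    simp only [lukVal, csize]
    rw [show (1 - lukVal A3 R3 C (Option.some i)) - (1 - lukVal A3 R3 C Option.none)
        = -(lukVal A3 R3 C (Option.some i) - lukVal A3 R3 C Option.none) by ring, abs_neg]
    exact hC i
  | all C hC =>
    rw [val_all, val_all]
    show |lukVal A3 R3 C (Option.some (i+1)) - lukVal A3 R3 C Option.none| ≤ _
    refine (hC (i+1)).trans ?_
    apply mul_le_mul_of_nonneg_left _ (Nat.cast_nonneg _)
    apply pow_le_pow_of_le_one (by norm_num) (by norm_num) (by omega)
  | ex C hC =>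
    rw [val_ex, val_ex]
    show |lukVal A3 R3 C (Option.some (i+1)) - lukVal A3 R3 C Option.none| ≤ _
    refine (hC (i+1)).trans ?_
    apply mul_le_mul_of_nonneg_left _ (Nat.cast_nonneg _)
    apply pow_le_pow_of_le_one (by norm_num) (by norm_num) (by omega)

lemma val_tendsto (C : ALCConcept) :
    Tendsto (fun i => lukVal A3 R3 C (Option.some i)) atTop (𝓝 (lukVal A3 R3 C Option.none)) := by
  rw [← tendsto_sub_nhds_zero_iff]
  have hg : Tendsto (fun i : ℕ => (csize C : ℝ) * ((2:ℝ)⁻¹) ^ (i+1)) atTop (𝓝 0) := by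
    have h2 : Tendsto (fun i : ℕ => ((2:ℝ)⁻¹) ^ (i+1)) atTop (𝓝 0) := by
      have h := tendsto_pow_atTop_nhds_zero_of_lt_one (by norm_num : (0:ℝ) ≤ 2⁻¹) (by norm_num)
      exact h.comp (tendsto_add_atTop_nat 1)
    simpa using h2.const_mul (csize C : ℝ)
  exact squeeze_zero_norm (fun i => by simpa [Real.norm_eq_abs] using val_close C i) hg

/-- The infimum over the domain is attained, given convergence along the naturals. -/
lemma inf_attained (h : Option ℕ → ℝ) (hb : BddBelow (Set.range h))
    (ht : Tendsto (fun i => h (Option.some i)) atTop (𝓝 (h Option.none))) :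
    ∃ y, (⨅ x, h x) = h y := by
  set m := ⨅ x, h x with hm
  by_cases hc : h Option.none = m
  · exact ⟨Option.none, hc.symm⟩
  · have hlt : m < h Option.none := lt_of_le_of_ne (ciInf_le hb _) (Ne.symm hc)
    set ε := (h Option.none - m) / 2 with hε
    have hεpos : 0 < ε := by simp [hε]; linarith
    obtain ⟨N, hN⟩ := (Metric.tendsto_atTop.mp ht) ε hεpos
    have hbig : ∀ i, N ≤ i → m + ε < h (Option.some i) := by
      intro i hi
      have := hN i hi
      rw [Real.dist_eq, abs_sub_lt_iff] at this
      have := this.2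
      simp only [hε] at *
      linarith
    -- the min over indices ≤ N
    obtain ⟨j, hjmem, hj⟩ := Finset.exists_min_image (Finset.range (N+1))
      (fun i => h (Option.some i)) ⟨0, Finset.mem_range.mpr (by omega)⟩
    refine ⟨Option.some j, le_antisymm (ciInf_le hb _) ?_⟩
    -- h (some j) is a lower bound
    have hjle : h (Option.some j) ≤ m + ε := by
      by_contra hcon
      push_neg at hcon
      have hlb : ∀ x, m + ε ≤ h x := by
        intro x
        cases x with
        | none => simp only [hε]; linarith
        | some i =>
          rcases le_or_gt N i with hi | hi
          · exact (hbig i hi).le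
          · exact hcon.le.trans (hj i (Finset.mem_range.mpr (by omega)))
      have : m + ε ≤ m := le_ciInf hlb
      linarith
    apply le_ciInf
    intro x
    cases x with
    | none => linarith
    | some i =>
      rcases le_or_gt N i with hi | hi
      · linarith [hbig i hi]
      · exact hj i (Finset.mem_range.mpr (by omega))

lemma lukImp_self (v : ℝ) : lukImp v v = 1 := by simp [lukImp]

lemma val_conj_all (x : Option ℕ) :
    lukVal A3 R3 (ALCConcept.conj (ALCConcept.all ALCConcept.atom) (ALCConcept.all ALCConcept.atom)) x
      = A3 x := by
  show lukT (lukVal A3 R3 (ALCConcept.all ALCConcept.atom) x)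
      (lukVal A3 R3 (ALCConcept.all ALCConcept.atom) x) = A3 x
  rw [val_all]
  show lukT (A3 (sux x)) (A3 (sux x)) = A3 x
  cases x with
  | none => simp [sux, A3, lukT]
  | some i =>
    simp only [sux, A3, lukT]
    have h1 : (0:ℝ) < 2 ^ (i+1) := by positivity
    have h2 : (0:ℝ) < 2 ^ (i+1+1) := by positivity
    rw [max_eq_left]
    · field_simp
      ring
    · rw [← add_div]
      rw [sub_nonneg, le_div_iff₀ h2]
      have : (2:ℝ) ^ (i+1+1) = 2 * 2 ^ (i+1) := by ring
      rw [this]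
      have : (1:ℝ) ≤ 2 ^ (i+1) := one_le_pow₀ (by norm_num)
      linarith
lemma lukT_one (v : ℝ) (hv : v ∈ Set.Icc (0:ℝ) 1) : lukT 1 v = v := by
  simp only [lukT]
  rw [show (1:ℝ) + v - 1 = v by ring, max_eq_left hv.1]

lemma lukImp_one (v : ℝ) (hv : v ∈ Set.Icc (0:ℝ) 1) : lukImp 1 v = v := by
  simp only [lukImp]
  rw [show (1:ℝ) - 1 + v = v by ring, min_eq_left hv.2]

lemma R3_sux (x : Option ℕ) : R3 x (sux x) = 1 := by rw [R3_eq]; simp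

lemma lukImp_nonneg (a b : ℝ) (ha : a ≤ 1) (hb : 0 ≤ b) : 0 ≤ lukImp a b :=
  le_min (by linarith) (by norm_num)

theorem stmt3 :
    IsInterp A3 R3 ∧ Witnessed A3 R3 ∧ ModelK2 A3 R3 (Option.some 0) := by
  refine ⟨⟨⟨Option.none⟩, A3_mem, ?_⟩, ?_, ?_, ?_, ⟨?_, ?_⟩, ?_, ?_⟩
  · -- R3 in [0,1]
    intro x y
    rw [R3_eq]
    by_cases h : y = sux x <;> simp [h]
  · -- Witnessed
    intro C D x
    refine ⟨⟨sux x, ?_⟩, ⟨sux x, ?_⟩, ?_⟩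
    · rw [val_ex, R3_sux, lukT_one _ (val_mem C _)]
    · rw [val_all, R3_sux, lukImp_one _ (val_mem C _)]
    · -- subsumption witness
      have hb : BddBelow (Set.range fun x => lukImp (lukVal A3 R3 C x) (lukVal A3 R3 D x)) := by
        refine ⟨0, ?_⟩
        rintro _ ⟨y, rfl⟩
        exact lukImp_nonneg _ _ (val_mem C y).2 (val_mem D y).1
      have ht : Tendsto
          (fun i => lukImp (lukVal A3 R3 C (Option.some i)) (lukVal A3 R3 D (Option.some i)))
          atTop (𝓝 (lukImp (lukVal A3 R3 C Option.none) (lukVal A3 R3 D Option.none))) := by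
        simp only [lukImp]
        exact Tendsto.min ((tendsto_const_nhds.sub (val_tendsto C)).add (val_tendsto D))
          tendsto_const_nhds
      exact inf_attained _ hb ht
  · -- A3 (some 0) = 1/2
    norm_num [A3]
  · -- top ⊑ ex top
    have : ∀ x, lukImp (lukVal A3 R3 ALCConcept.top x)
        (lukVal A3 R3 (ALCConcept.ex ALCConcept.top) x) = 1 := by
      intro x
      rw [val_ex]
      show lukImp 1 1 = 1
      simp [lukImp]
    rw [lukSub]
    simp only [this]
    exact ciInf_const
  · -- all A ⊑ ex A
    have : ∀ x, lukImp (lukVal A3 R3 (ALCConcept.all ALCConcept.atom) x)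
        (lukVal A3 R3 (ALCConcept.ex ALCConcept.atom) x) = 1 := by
      intro x
      rw [val_ex, val_all, lukImp_self]
    rw [lukSub]
    simp only [this]
    exact ciInf_const
  · -- ex A ⊑ all A
    have : ∀ x, lukImp (lukVal A3 R3 (ALCConcept.ex ALCConcept.atom) x)
        (lukVal A3 R3 (ALCConcept.all ALCConcept.atom) x) = 1 := by
      intro x
      rw [val_ex, val_all, lukImp_self]
    rw [lukSub]
    simp only [this]
    exact ciInf_const
  · -- A ⊑ conj
    have : ∀ x, lukImp (lukVal A3 R3 ALCConcept.atom x)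
        (lukVal A3 R3 (ALCConcept.conj (ALCConcept.all ALCConcept.atom)
          (ALCConcept.all ALCConcept.atom)) x) = 1 := by
      intro x
      rw [val_conj_all]
      exact lukImp_self _
    rw [lukSub]
    simp only [this]
    exact ciInf_const
  · -- conj ⊑ A
    have : ∀ x, lukImp (lukVal A3 R3 (ALCConcept.conj (ALCConcept.all ALCConcept.atom)
          (ALCConcept.all ALCConcept.atom)) x)
        (lukVal A3 R3 ALCConcept.atom x) = 1 := by
      intro x
      rw [val_conj_all]
      exact lukImp_self _
    rw [lukSub]
    simp only [this]
    exact ciInf_const
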